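/- For digraphs G and H with underlying undirected graphs \underline{G}, \underline{H}, one has E(\underline{G} × \underline{H}) = E(\underline{G × H}) ∪ E(\underline{G × H^{-1}}), and consequently χ(\underline{G} × \underline{H}) ≤ χ(G × H) · χ(G × H^{-1}). -/

import Mathlib

open SimpleGraph

universe u v w

/-- The categorical (tensor) product of two simple graphs. -/
def tensorGraph {α : Type u} {β : Type v} (G : SimpleGraph α) (H : SimpleGraph β) :
    SimpleGraph (α × β) where
  Adj p q := G.Adj p.1 q.1 ∧ H.Adj p.2 q.2
  symm := ⟨fun p q h => ⟨h.1.symm, h.2.symm⟩⟩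
  loopless := ⟨fun p h => G.loopless.irrefl p.1 h.1⟩

/-- Existence of a digraph homomorphism between relation-digraphs. -/
def DigraphHomEx {V : Type u} {W : Type v} (E : V → V → Prop) (F : W → W → Prop) : Prop :=
  ∃ f : V → W, ∀ ⦃x y : V⦄, E x y → F (f x) (f y)

/-- The categorical product of relation-digraphs. -/
def tensorRel {V : Type u} {W : Type v} (E : V → V → Prop) (F : W → W → Prop) :
    V × W → V × W → Prop :=
  fun p q => E p.1 q.1 ∧ F p.2 q.2

/-- The directed cycle of length n: arcs i → i + 1 on ZMod n. -/
def dirCycleAdj (n : ℕ) : ZMod n → ZMod n → Prop := fun i j => j = i + 1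

lemma sup_colorable {V : Type u} {G₁ G₂ : SimpleGraph V} {n m : ℕ}
    (h₁ : G₁.Colorable n) (h₂ : G₂.Colorable m) : (G₁ ⊔ G₂).Colorable (n * m) := by
  obtain ⟨c₁⟩ := h₁
  obtain ⟨c₂⟩ := h₂
  have C : (G₁ ⊔ G₂).Coloring (Fin n × Fin m) :=
    SimpleGraph.Coloring.mk (fun v => (c₁ v, c₂ v)) (by
      rintro u v (h | h) heq
      · exact c₁.valid h (congrArg Prod.fst heq)
      · exact c₂.valid h (congrArg Prod.snd heq))
  have := C.colorable
  rwa [Fintype.card_prod, Fintype.card_fin, Fintype.card_fin] at this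

lemma chromatic_sup_le {V : Type u} (G₁ G₂ : SimpleGraph V) :
    (G₁ ⊔ G₂).chromaticNumber ≤ G₁.chromaticNumber * G₂.chromaticNumber := by
  rcases eq_or_ne G₁.chromaticNumber ⊤ with h₁ | h₁
  · rcases eq_or_ne G₂.chromaticNumber 0 with h₂ | h₂
    · -- G₂ colorable with 0 colors: V is empty-ish
      have : G₂.Colorable 0 := by
        rw [← SimpleGraph.chromaticNumber_le_iff_colorable, h₂]; simp
      have : (G₁ ⊔ G₂).Colorable 0 := by
        obtain ⟨c⟩ := this
        exact ⟨SimpleGraph.Coloring.mk (fun v => c v) (fun {u v} _ => (Fin.elim0 (c u)))⟩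
      calc (G₁ ⊔ G₂).chromaticNumber ≤ (0 : ℕ) := this.chromaticNumber_le
        _ ≤ _ := by simp
    · rw [h₁, ENat.top_mul h₂]; exact le_top
  · rcases eq_or_ne G₂.chromaticNumber ⊤ with h₂ | h₂
    · rcases eq_or_ne G₁.chromaticNumber 0 with h₀ | h₀
      · have : G₁.Colorable 0 := by
          rw [← SimpleGraph.chromaticNumber_le_iff_colorable, h₀]; simp
        have : (G₁ ⊔ G₂).Colorable 0 := by
          obtain ⟨c⟩ := this
          exact ⟨SimpleGraph.Coloring.mk (fun v => c v) (fun {u v} _ => (Fin.elim0 (c u)))⟩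
        calc (G₁ ⊔ G₂).chromaticNumber ≤ (0 : ℕ) := this.chromaticNumber_le
          _ ≤ _ := by simp
      · rw [h₂, ENat.mul_top h₀]; exact le_top
    · obtain ⟨n, hn⟩ := WithTop.ne_top_iff_exists.mp h₁
      obtain ⟨m, hm⟩ := WithTop.ne_top_iff_exists.mp h₂
      have hc₁ : G₁.Colorable n := by
        rw [← SimpleGraph.chromaticNumber_le_iff_colorable, ← hn]; exact le_rfl
      have hc₂ : G₂.Colorable m := by
        rw [← SimpleGraph.chromaticNumber_le_iff_colorable, ← hm]; exact le_rfl
      have := (sup_colorable hc₁ hc₂).chromaticNumber_le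
      rw [← hn, ← hm]
      calc (G₁ ⊔ G₂).chromaticNumber ≤ ((n * m : ℕ) : ℕ∞) := this
        _ = (n : ℕ∞) * m := by push_cast; ring

theorem underlying_tensor_eq_and_chromatic {α : Type u} {β : Type v}
    (E : α → α → Prop) (F : β → β → Prop)
    (hE : ∀ x, ¬ E x x) (hF : ∀ y, ¬ F y y) :
    (tensorGraph (SimpleGraph.fromRel E) (SimpleGraph.fromRel F) =
      SimpleGraph.fromRel (tensorRel E F) ⊔ SimpleGraph.fromRel (tensorRel E (flip F))) ∧
    (tensorGraph (SimpleGraph.fromRel E) (SimpleGraph.fromRel F)).chromaticNumber ≤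
      (SimpleGraph.fromRel (tensorRel E F)).chromaticNumber *
        (SimpleGraph.fromRel (tensorRel E (flip F))).chromaticNumber := by
  have heq : tensorGraph (SimpleGraph.fromRel E) (SimpleGraph.fromRel F) =
      SimpleGraph.fromRel (tensorRel E F) ⊔ SimpleGraph.fromRel (tensorRel E (flip F)) := by
    ext ⟨x, y⟩ ⟨x', y'⟩
    simp only [tensorGraph, SimpleGraph.fromRel_adj, SimpleGraph.sup_adj, tensorRel, flip,
      ne_eq, Prod.mk.injEq, not_and]
    constructor
    · rintro ⟨⟨hx, hEx⟩, ⟨hy, hFy⟩⟩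
      refine ?_
      rcases hEx with hE1 | hE1 <;> rcases hFy with hF1 | hF1
      · exact Or.inl ⟨fun h _ => hx h, Or.inl ⟨hE1, hF1⟩⟩
      · exact Or.inr ⟨fun h _ => hx h, Or.inl ⟨hE1, hF1⟩⟩
      · exact Or.inr ⟨fun h _ => hx h, Or.inr ⟨hE1, hF1⟩⟩
      · exact Or.inl ⟨fun h _ => hx h, Or.inr ⟨hE1, hF1⟩⟩
    · rintro (⟨_, (⟨h1, h2⟩ | ⟨h1, h2⟩)⟩ | ⟨_, (⟨h1, h2⟩ | ⟨h1, h2⟩)⟩)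
      · exact ⟨⟨fun h => hE x' (h ▸ h1), Or.inl h1⟩, ⟨fun h => hF y' (h ▸ h2), Or.inl h2⟩⟩
      · exact ⟨⟨fun h => hE x' (h ▸ h1), Or.inr h1⟩, ⟨fun h => hF y' (h ▸ h2), Or.inr h2⟩⟩
      · exact ⟨⟨fun h => hE x' (h ▸ h1), Or.inl h1⟩, ⟨fun h => hF y (h ▸ h2), Or.inr h2⟩⟩
      · exact ⟨⟨fun h => hE x (h ▸ h1), Or.inr h1⟩, ⟨fun h => hF y' (h ▸ h2), Or.inl h2⟩⟩
    
  refine ⟨heq, ?_⟩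
  rw [heq]
  exact chromatic_sup_le _ _
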